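/- Let M ≥ 1 be a real number and set α = M^{−1/2}. Define the caching gain of the star-network example as f(x_1,x_2) = (1−α)·x_1 + α·M·x_2 for (x_1,x_2) ∈ {0,1}² with x_1 + x_2 = 1 (the single cache slot stores exactly one of the two items). Then the steady-state expected gain of path replication with LRU/LFU/FIFO, which equals (1−α)·f(1,0) + α·f(0,1) = (1−α)² + α²M, satisfies (1−α)² + α²M ≤ (2/√M) · max{f(1,0), f(0,1)}; in particular the ratio of the steady-state expected caching gain to the optimal caching gain is at most 2·M^{−1/2}. -/

import Mathlib

/-- on the star-network example with `α = M^{−1/2}` and caching gain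
`f(x₁,x₂) = (1−α)x₁ + αM x₂` on the two feasible allocations `(1,0)` and `(0,1)`,
the steady-state expected gain `(1−α)·f(1,0) + α·f(0,1) = (1−α)² + α²M` of path
replication with LRU/LFU/FIFO is at most `(2/√M)·max{f(1,0), f(0,1)}`. -/
theorem stmt10 (M : ℝ) (hM : 1 ≤ M) :
    let α : ℝ := 1 / Real.sqrt M
    let f : ℝ → ℝ → ℝ := fun x1 x2 => (1 - α) * x1 + α * M * x2
    ((1 - α) * f 1 0 + α * f 0 1 = (1 - α) ^ 2 + α ^ 2 * M) ∧
    (1 - α) * f 1 0 + α * f 0 1 ≤ (2 / Real.sqrt M) * max (f 1 0) (f 0 1) := by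
  intro α f
  have hs : 1 ≤ Real.sqrt M := by
    rw [show (1:ℝ) = Real.sqrt 1 by simp]
    exact Real.sqrt_le_sqrt hM
  have hs0 : 0 < Real.sqrt M := lt_of_lt_of_le one_pos hs
  have hs2 : Real.sqrt M * Real.sqrt M = M :=
    Real.mul_self_sqrt (le_trans zero_le_one hM)
  have hα : α = 1 / Real.sqrt M := rfl
  have hαM : α * M = Real.sqrt M := by
    rw [hα, ← hs2]; field_simp; rw [Real.sqrt_sq hs0.le]
  have hf10 : f 1 0 = 1 - α := by simp [f]
  have hf01 : f 0 1 = Real.sqrt M := by simp [f, hαM]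
  have hα2 : α ^ 2 * M = 1 := by
    rw [hα, ← hs2]; field_simp; rw [Real.sqrt_sq hs0.le]
  constructor
  · rw [hf10, hf01, ← hαM]; ring
  · have hmax : max (f 1 0) (f 0 1) = Real.sqrt M := by
      rw [hf10, hf01]
      apply max_eq_right
      have : 0 ≤ α := by positivity
      linarith
    have h2 : 2 / Real.sqrt M * Real.sqrt M = 2 := by field_simp
    rw [hmax, hf10, hf01, h2]
    have hαs : α * Real.sqrt M = 1 := by rw [hα]; field_simp
    have hα0 : 0 ≤ α := by positivity
    have hα1 : α ≤ 1 := by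
      rw [hα]; rw [div_le_one hs0]; exact hs
    nlinarith [hαs]
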